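/- Let μ be a probability measure on [0,1], η₀ : [0,1] → [0,1] measurable, and for s ∈ [0,1] let w_s be the probability measure with density proportional to (1/Z(u,h))·sech((s-u)/h) with respect to μ. Define η(s) = E_{w_s}[η₀]. Then η is differentiable and η'(s) = (1/h)·Cov_{w_s}(η₀(S), tanh((S - s)/h)). -/

import Mathlib

open Real MeasureTheory

/-- Sech kernel normalization constant `Z(u,h) = ∫₀¹ sech((t-u)/h) dt`. -/
noncomputable def Zker (u h : ℝ) : ℝ := ∫ t in (0:ℝ)..1, 1 / Real.cosh ((t - u) / h)

/-- Unnormalized kernel weight `(1/Z(u,h))·sech((s-u)/h)`. -/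
noncomputable def kerW (h s u : ℝ) : ℝ := (1 / Zker u h) * (1 / Real.cosh ((s - u) / h))

/-- Denominator `D(s) = ∫ (1/Z(u,h))·sech((s-u)/h) dμ(u)`. -/
noncomputable def Dfun (μ : Measure ℝ) (h s : ℝ) : ℝ := ∫ u, kerW h s u ∂μ

/-- Expectation of `A` under the reweighted measure `w_s` (density `kerW h s / D(s)` w.r.t. μ). -/
noncomputable def wExp (μ : Measure ℝ) (h s : ℝ) (A : ℝ → ℝ) : ℝ :=
  (∫ u, A u * kerW h s u ∂μ) / Dfun μ h s

/-- Covariance of `A` and `B` under `w_s`. -/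
noncomputable def wCov (μ : Measure ℝ) (h s : ℝ) (A B : ℝ → ℝ) : ℝ :=
  wExp μ h s (fun u => A u * B u) - wExp μ h s A * wExp μ h s B

lemma abs_tanh_le_one (x : ℝ) : |Real.tanh x| ≤ 1 := by
  rw [Real.tanh_eq_sinh_div_cosh, abs_div, abs_of_pos (Real.cosh_pos x),
    div_le_one (Real.cosh_pos x), Real.abs_sinh]
  exact le_of_lt ((Real.sinh_lt_cosh _).trans_le (Real.cosh_abs x).le)

lemma sech_hasDerivAt (h : ℝ) (hh : 0 < h) (u s : ℝ) :
    HasDerivAt (fun x => 1 / Real.cosh ((x - u) / h))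
      (-(1 / h) * Real.tanh ((s - u) / h) * (1 / Real.cosh ((s - u) / h))) s := by
  have h1 : HasDerivAt (fun x : ℝ => (x - u) / h) (1 / h) s := by
    simpa using ((hasDerivAt_id s).sub_const u).div_const h
  have h2 := (Real.hasDerivAt_cosh ((s - u) / h)).comp s h1
  have h3 := h2.inv (Real.cosh_pos _).ne'
  simp only [one_div]
  refine h3.congr_deriv ?_
  simp only [Function.comp_apply]
  rw [Real.tanh_eq_sinh_div_cosh]
  have := (Real.cosh_pos ((s - u) / h)).ne'
  field_simp

lemma zker_eq (h : ℝ) (hh : 0 < h) (u : ℝ) :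
    Zker u h = h * Real.arctan (Real.sinh ((1 - u) / h))
      - h * Real.arctan (Real.sinh ((0 - u) / h)) := by
  have key : ∀ t : ℝ, HasDerivAt (fun t => h * Real.arctan (Real.sinh ((t - u) / h)))
      (1 / Real.cosh ((t - u) / h)) t := by
    intro t
    have h1 : HasDerivAt (fun x : ℝ => (x - u) / h) (1 / h) t := by
      simpa using ((hasDerivAt_id t).sub_const u).div_const h
    have h2 := (Real.hasDerivAt_sinh ((t - u) / h)).comp t h1
    have h3 := ((Real.hasDerivAt_arctan (Real.sinh ((t - u) / h))).comp t h2).const_mul h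
    refine h3.congr_deriv ?_
    symm
    have hc := (Real.cosh_pos ((t - u) / h)).ne'
    rw [← Real.cosh_sq']
    field_simp
  have hcont : ContinuousOn (fun t => 1 / Real.cosh ((t - u) / h)) (Set.uIcc 0 1) := by
    apply Continuous.continuousOn
    exact continuous_const.div (Real.continuous_cosh.comp (by fun_prop))
      (fun t => (Real.cosh_pos _).ne')
  have := intervalIntegral.integral_eq_sub_of_hasDerivAt (fun t _ => key t)
    (hcont.intervalIntegrable)
  rw [Zker, this]

lemma zker_cont (h : ℝ) (hh : 0 < h) : Continuous (fun u => Zker u h) := by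
  have : (fun u => Zker u h) = fun u => h * Real.arctan (Real.sinh ((1 - u) / h))
      - h * Real.arctan (Real.sinh ((0 - u) / h)) := funext (zker_eq h hh)
  rw [this]
  exact (continuous_const.mul (Real.continuous_arctan.comp
    (Real.continuous_sinh.comp (by fun_prop)))).sub (continuous_const.mul
    (Real.continuous_arctan.comp (Real.continuous_sinh.comp (by fun_prop))))

lemma zker_le_one (h : ℝ) (hh : 0 < h) (u : ℝ) : Zker u h ≤ 1 := by
  have : Zker u h ≤ ∫ t in (0:ℝ)..1, (1:ℝ) := by
    apply intervalIntegral.integral_mono_on zero_le_one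
    · exact (Continuous.continuousOn (continuous_const.div
        (Real.continuous_cosh.comp (by fun_prop)) (fun t => (Real.cosh_pos _).ne'))).intervalIntegrable
    · exact intervalIntegrable_const
    · intro t _
      rw [div_le_one (Real.cosh_pos _)]
      exact Real.one_le_cosh _
  simpa using this

lemma zker_ge (h : ℝ) (hh : 0 < h) (u : ℝ) (hu : u ∈ Set.Icc (0:ℝ) 1) :
    1 / Real.cosh (1 / h) ≤ Zker u h := by
  have : ∫ t in (0:ℝ)..1, (1 / Real.cosh (1 / h)) ≤ Zker u h := by
    apply intervalIntegral.integral_mono_on zero_le_one intervalIntegrable_const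
    · exact (Continuous.continuousOn (continuous_const.div
        (Real.continuous_cosh.comp (by fun_prop)) (fun t => (Real.cosh_pos _).ne'))).intervalIntegrable
    · intro t ht
      apply one_div_le_one_div_of_le (Real.cosh_pos _)
      rw [Real.cosh_le_cosh]
      obtain ⟨ht0, ht1⟩ := ht
      obtain ⟨hu0, hu1⟩ := hu
      rw [abs_div, abs_div, abs_of_pos hh, abs_one]
      gcongr
      exact abs_le.mpr ⟨by linarith, by linarith⟩
  simpa using this

lemma zker_pos (h : ℝ) (hh : 0 < h) (u : ℝ) (hu : u ∈ Set.Icc (0:ℝ) 1) : 0 < Zker u h :=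
  lt_of_lt_of_le (by positivity) (zker_ge h hh u hu)

lemma zker_inv_le (h : ℝ) (hh : 0 < h) (u : ℝ) (hu : u ∈ Set.Icc (0:ℝ) 1) :
    1 / Zker u h ≤ Real.cosh (1 / h) := by
  rw [div_le_iff₀ (zker_pos h hh u hu)]
  have := zker_ge h hh u hu
  have hc := Real.cosh_pos (1 / h)
  calc (1:ℝ) = Real.cosh (1/h) * (1 / Real.cosh (1/h)) := by field_simp
  _ ≤ Real.cosh (1/h) * Zker u h := by gcongr

lemma kerW_meas (h s : ℝ) (hh : 0 < h) : Measurable (fun u => kerW h s u) := by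
  unfold kerW
  exact (measurable_const.div (zker_cont h hh).measurable).mul
    ((measurable_const.div ((Real.continuous_cosh.comp (by fun_prop)).measurable)))

lemma kerW_le (h s : ℝ) (hh : 0 < h) (u : ℝ) (hu : u ∈ Set.Icc (0:ℝ) 1) :
    kerW h s u ≤ Real.cosh (1 / h) := by
  unfold kerW
  calc (1 / Zker u h) * (1 / Real.cosh ((s - u) / h)) ≤ Real.cosh (1/h) * 1 := by
        apply mul_le_mul (zker_inv_le h hh u hu) _ (by positivity) (Real.cosh_pos _).le
        rw [div_le_one (Real.cosh_pos _)]; exact Real.one_le_cosh _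
  _ = Real.cosh (1/h) := mul_one _

lemma kerW_nonneg (h s : ℝ) (hh : 0 < h) (u : ℝ) (hu : u ∈ Set.Icc (0:ℝ) 1) :
    0 ≤ kerW h s u := by
  unfold kerW
  have := zker_pos h hh u hu
  positivity

lemma kerW_ge (h s : ℝ) (hh : 0 < h) (hs : s ∈ Set.Icc (0:ℝ) 1) (u : ℝ)
    (hu : u ∈ Set.Icc (0:ℝ) 1) : 1 / Real.cosh (1 / h) ≤ kerW h s u := by
  unfold kerW
  have h1 : (1:ℝ) ≤ 1 / Zker u h := by
    rw [le_div_iff₀ (zker_pos h hh u hu), one_mul]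
    exact zker_le_one h hh u
  have h2 : 1 / Real.cosh (1/h) ≤ 1 / Real.cosh ((s - u) / h) := by
    apply one_div_le_one_div_of_le (Real.cosh_pos _)
    rw [Real.cosh_le_cosh]
    obtain ⟨hs0, hs1⟩ := hs; obtain ⟨hu0, hu1⟩ := hu
    rw [abs_div, abs_div, abs_of_pos hh, abs_one]
    gcongr
    exact abs_le.mpr ⟨by linarith, by linarith⟩
  calc 1 / Real.cosh (1/h) = 1 * (1 / Real.cosh (1/h)) := (one_mul _).symm
  _ ≤ (1 / Zker u h) * (1 / Real.cosh ((s - u) / h)) :=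
      mul_le_mul h1 h2 (by positivity) (by positivity)

lemma key_deriv (μ : Measure ℝ) [IsProbabilityMeasure μ] (hsupp : μ (Set.Icc (0:ℝ) 1) = 1)
    (c : ℝ → ℝ) (hc : Measurable c) (hcb : ∀ u ∈ Set.Icc (0:ℝ) 1, |c u| ≤ 1)
    (h : ℝ) (hh : 0 < h) (s : ℝ) :
    Integrable (fun u => (c u * Real.tanh ((u - s) / h)) * kerW h s u) μ ∧
    HasDerivAt (fun x => ∫ u, c u * kerW h x u ∂μ)
      ((1 / h) * ∫ u, (c u * Real.tanh ((u - s) / h)) * kerW h s u ∂μ) s := by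
  have hae : ∀ᵐ u ∂μ, u ∈ Set.Icc (0:ℝ) 1 := by
    rw [ae_iff]
    have : {a : ℝ | ¬a ∈ Set.Icc (0:ℝ) 1} = (Set.Icc (0:ℝ) 1)ᶜ := rfl
    rw [this, measure_compl measurableSet_Icc (measure_ne_top μ _), hsupp, measure_univ,
      tsub_self]
  set F' : ℝ → ℝ → ℝ := fun x u => c u * ((1 / Zker u h) *
    (-(1 / h) * Real.tanh ((x - u) / h) * (1 / Real.cosh ((x - u) / h)))) with hF'
  have hmeasF : ∀ x : ℝ, AEStronglyMeasurable (fun u => c u * kerW h x u) μ :=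
    fun x => ((hc.mul (kerW_meas h x hh)).aestronglyMeasurable)
  have hmeasF' : ∀ x : ℝ, AEStronglyMeasurable (F' x) μ := by
    intro x
    apply Measurable.aestronglyMeasurable
    apply hc.mul
    apply (measurable_const.div (zker_cont h hh).measurable).mul
    apply Measurable.mul
    · have hT : Continuous Real.tanh := by
        rw [show Real.tanh = fun x => Real.sinh x / Real.cosh x from
          funext Real.tanh_eq_sinh_div_cosh]
        exact Real.continuous_sinh.div Real.continuous_cosh (fun x => (Real.cosh_pos x).ne')
      exact measurable_const.mul (hT.comp (by fun_prop)).measurable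
    · exact measurable_const.div (Real.continuous_cosh.comp (by fun_prop)).measurable
  have hbF' : ∀ᵐ u ∂μ, ∀ x ∈ Metric.ball s 1, ‖F' x u‖ ≤ (1 / h) * Real.cosh (1 / h) := by
    filter_upwards [hae] with u hu x _
    have h1 : |c u| ≤ 1 := hcb u hu
    have h2 : |1 / Zker u h| ≤ Real.cosh (1 / h) := by
      rw [abs_of_pos (by have := zker_pos h hh u hu; positivity)]
      exact zker_inv_le h hh u hu
    have h3 : |(-(1 / h) * Real.tanh ((x - u) / h) * (1 / Real.cosh ((x - u) / h)))| ≤ 1 / h := by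
      rw [abs_mul, abs_mul, abs_neg, abs_of_pos (one_div_pos.mpr hh),
        abs_of_pos (one_div_pos.mpr (Real.cosh_pos _))]
      calc 1 / h * |Real.tanh ((x - u) / h)| * (1 / Real.cosh ((x - u) / h))
          ≤ 1 / h * 1 * 1 := by
            gcongr
            · exact abs_tanh_le_one _
            · rw [div_le_one (Real.cosh_pos _)]; exact Real.one_le_cosh _
      _ = 1 / h := by ring
    rw [hF', Real.norm_eq_abs, abs_mul, abs_mul]
    calc |c u| * (|1 / Zker u h| *
          |(-(1 / h) * Real.tanh ((x - u) / h) * (1 / Real.cosh ((x - u) / h)))|)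
        ≤ 1 * (Real.cosh (1 / h) * (1 / h)) :=
          mul_le_mul h1 (mul_le_mul h2 h3 (abs_nonneg _) (Real.cosh_pos _).le)
            (by positivity) zero_le_one
      _ = (1 / h) * Real.cosh (1 / h) := by ring
  have hFint : Integrable (fun u => c u * kerW h s u) μ := by
    apply (integrable_const (Real.cosh (1 / h))).mono' (hmeasF s)
    filter_upwards [hae] with u hu
    rw [Real.norm_eq_abs, abs_mul]
    calc |c u| * |kerW h s u| ≤ 1 * Real.cosh (1 / h) := by
          apply mul_le_mul (hcb u hu) _ (abs_nonneg _) zero_le_one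
          rw [abs_of_nonneg (kerW_nonneg h s hh u hu)]
          exact kerW_le h s hh u hu
    _ = Real.cosh (1 / h) := one_mul _
  have hdiff : ∀ᵐ u ∂μ, ∀ x ∈ Metric.ball s 1,
      HasDerivAt (fun x => c u * kerW h x u) (F' x u) x := by
    filter_upwards with u x _
    have := ((sech_hasDerivAt h hh u x).const_mul (1 / Zker u h)).const_mul (c u)
    exact this
  have main := hasDerivAt_integral_of_dominated_loc_of_deriv_le (Metric.ball_mem_nhds s one_pos)
    (Filter.Eventually.of_forall hmeasF) hFint (hmeasF' s) hbF'
    (integrable_const _) hdiff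
  have heq : ∀ u : ℝ, F' s u = (1 / h) * ((c u * Real.tanh ((u - s) / h)) * kerW h s u) := by
    intro u
    rw [hF']
    show c u * _ = _
    unfold kerW
    rw [show (s - u) / h = -((u - s) / h) by ring, Real.tanh_neg, Real.cosh_neg]
    ring
  constructor
  · have hint := main.1
    rw [show F' s = fun u => (1 / h) * ((c u * Real.tanh ((u - s) / h)) * kerW h s u) from
      funext heq] at hint
    exact (integrable_const_mul_iff
      (isUnit_iff_ne_zero.mpr (by positivity : (1:ℝ) / h ≠ 0)) _).mp hint
  · have hres := main.2
    have : ∫ u, F' s u ∂μ = (1 / h) * ∫ u, (c u * Real.tanh ((u - s) / h)) * kerW h s u ∂μ := by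
      rw [← integral_const_mul]
      exact integral_congr_ae (Filter.Eventually.of_forall heq)
    rwa [this] at hres

theorem perturbed_calibration_deriv
    (μ : Measure ℝ) [IsProbabilityMeasure μ] (hsupp : μ (Set.Icc (0:ℝ) 1) = 1)
    (η₀ : ℝ → ℝ) (hη₀meas : Measurable η₀) (hη₀b : ∀ u ∈ Set.Icc (0:ℝ) 1, η₀ u ∈ Set.Icc (0:ℝ) 1)
    (h : ℝ) (hh : 0 < h) (s : ℝ) (hs : s ∈ Set.Icc (0:ℝ) 1) :
    HasDerivAt (fun s' => wExp μ h s' η₀)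
      ((1 / h) * wCov μ h s η₀ (fun u => Real.tanh ((u - s) / h))) s := by
  have hae : ∀ᵐ u ∂μ, u ∈ Set.Icc (0:ℝ) 1 := by
    rw [ae_iff]
    have : {a : ℝ | ¬a ∈ Set.Icc (0:ℝ) 1} = (Set.Icc (0:ℝ) 1)ᶜ := rfl
    rw [this, measure_compl measurableSet_Icc (measure_ne_top μ _), hsupp, measure_univ,
      tsub_self]
  have hN := (key_deriv μ hsupp η₀ hη₀meas
    (fun u hu => abs_le.mpr ⟨by linarith [(hη₀b u hu).1], (hη₀b u hu).2⟩) h hh s).2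
  have hD := (key_deriv μ hsupp (fun _ => 1) measurable_const
    (fun u _ => by simp) h hh s).2
  simp only [one_mul] at hD
  -- positivity of Dfun
  have hkint : Integrable (fun u => kerW h s u) μ := by
    apply (integrable_const (Real.cosh (1 / h))).mono'
      (kerW_meas h s hh).aestronglyMeasurable
    filter_upwards [hae] with u hu
    rw [Real.norm_eq_abs, abs_of_nonneg (kerW_nonneg h s hh u hu)]
    exact kerW_le h s hh u hu
  have hDpos : 0 < Dfun μ h s := by
    have hmono : ∫ (_ : ℝ), 1 / Real.cosh (1 / h) ∂μ ≤ ∫ u, kerW h s u ∂μ := by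
      apply integral_mono_ae (integrable_const _) hkint
      filter_upwards [hae] with u hu
      exact kerW_ge h s hh hs u hu
    rw [integral_const, probReal_univ] at hmono
    simp only [ENNReal.toReal_one, one_smul] at hmono
    calc (0:ℝ) < 1 / Real.cosh (1 / h) := by positivity
    _ ≤ Dfun μ h s := hmono
  have hDderiv : HasDerivAt (fun x => Dfun μ h x)
      ((1 / h) * ∫ u, Real.tanh ((u - s) / h) * kerW h s u ∂μ) s := hD
  have hdiv := hN.div hDderiv hDpos.ne'
  have hval : (1 / h) * wCov μ h s η₀ (fun u => Real.tanh ((u - s) / h)) =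
      ((1 / h) * (∫ u, (η₀ u * Real.tanh ((u - s) / h)) * kerW h s u ∂μ) * Dfun μ h s -
        (∫ u, η₀ u * kerW h s u ∂μ) *
          ((1 / h) * ∫ u, Real.tanh ((u - s) / h) * kerW h s u ∂μ)) / Dfun μ h s ^ 2 := by
    simp only [wCov, wExp]
    field_simp
  rw [hval]
  exact hdiv
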